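/- Let G be a graph with λ_3(G) = k ≥ 2 and S = {x, y, z} a set of three distinct vertices of G. Then there exist k − 2 pairwise edge-disjoint S-Steiner trees T_1, …, T_{k−2} such that no tree T_i uses any edge of the induced subgraph G[S] (i.e., no edge with both endpoints in S). -/

import Mathlib

open Classical

variable {V W : Type*}

/-- An `S`-Steiner tree: a subgraph of `G` that is a tree and contains `S`. -/
def IsSteinerTree (G : SimpleGraph V) (S : Set V) (T : G.Subgraph) : Prop :=
  S ⊆ T.verts ∧ T.coe.IsTree

/-- There exist `n` pairwise edge-disjoint `S`-Steiner trees in `G`. -/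
def HasSteinerPacking (G : SimpleGraph V) (S : Set V) (n : ℕ) : Prop :=
  ∃ T : Fin n → G.Subgraph, (∀ i, IsSteinerTree G S (T i)) ∧
    ∀ i j, i ≠ j → (T i).edgeSet ∩ (T j).edgeSet = ∅

/-- `λ(S)`: maximum number of pairwise edge-disjoint `S`-Steiner trees. -/
noncomputable def steinerNum (G : SimpleGraph V) (S : Set V) : ℕ :=
  sSup {n | HasSteinerPacking G S n}

/-- Generalized `k`-edge-connectivity `λ_k(G)`. -/
noncomputable def genEdgeConn (G : SimpleGraph V) (k : ℕ) : ℕ :=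
  sInf {m | ∃ S : Set V, S.Finite ∧ S.ncard = k ∧ steinerNum G S = m}

/-- Edge-connectivity: minimum number of edges whose deletion disconnects `G`. -/
noncomputable def edgeConn (G : SimpleGraph V) : ℕ :=
  sInf {m | ∃ F : Set (Sym2 V), F ⊆ G.edgeSet ∧ F.ncard = m ∧ ¬ (G.deleteEdges F).Connected}

/-- Degree of a vertex as the cardinality of its neighbor set. -/
noncomputable def degOf (G : SimpleGraph V) (v : V) : ℕ :=
  (G.neighborSet v).ncard

/-- Minimum degree. -/
noncomputable def minDeg (G : SimpleGraph V) : ℕ :=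
  sInf {d | ∃ v, degOf G v = d}

/-- The lexicographic product `G ∘ H`. -/
def lexProd (G : SimpleGraph V) (H : SimpleGraph W) : SimpleGraph (V × W) where
  Adj p q := G.Adj p.1 q.1 ∨ (p.1 = q.1 ∧ H.Adj p.2 q.2)
  symm := by
    constructor
    rintro p q (h | ⟨h1, h2⟩)
    · exact Or.inl h.symm
    · exact Or.inr ⟨h1.symm, h2.symm⟩
  loopless := by
    constructor
    rintro p (h | ⟨_, h⟩)
    · exact G.loopless.irrefl _ h
    · exact H.loopless.irrefl _ h

section Helpers
open SimpleGraph
variable {α : Type*}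

private lemma walk_del_or {G : SimpleGraph α} (y : α) {a x : α}
    (p : G.Walk a x) :
    (G \ SimpleGraph.fromEdgeSet {s(x, y)}).Reachable a x ∨
    (G \ SimpleGraph.fromEdgeSet {s(x, y)}).Reachable a y := by
  induction p with
  | nil => exact Or.inl (Reachable.refl _)
  | @cons a c b hac p ih =>
    by_cases he : s(a, c) = s(b, y)
    · rw [Sym2.eq_iff] at he
      rcases he with ⟨h1, h2⟩ | ⟨h1, h2⟩
      · subst h1; exact Or.inl (Reachable.refl _)
      · subst h1; exact Or.inr (Reachable.refl _)
    · have hadj : (G \ SimpleGraph.fromEdgeSet {s(b, y)}).Adj a c := by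
        rw [sdiff_adj]
        refine ⟨hac, ?_⟩
        rw [fromEdgeSet_adj]
        rintro ⟨hmem, -⟩
        exact he hmem
      rcases ih with h' | h'
      · exact Or.inl (hadj.reachable.trans h')
      · exact Or.inr (hadj.reachable.trans h')

private lemma reach_del_or {G : SimpleGraph α} (y : α) {a x : α}
    (h : G.Reachable a x) :
    (G \ SimpleGraph.fromEdgeSet {s(x, y)}).Reachable a x ∨
    (G \ SimpleGraph.fromEdgeSet {s(x, y)}).Reachable a y := by
  obtain ⟨p⟩ := h; exact walk_del_or y p

private lemma walk_del_reach {G : SimpleGraph α} {x y : α}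
    (hr : (G \ SimpleGraph.fromEdgeSet {s(x, y)}).Reachable x y) {a b : α}
    (p : G.Walk a b) : (G \ SimpleGraph.fromEdgeSet {s(x, y)}).Reachable a b := by
  induction p with
  | nil => exact Reachable.refl _
  | @cons a c b hac p ih =>
    refine Reachable.trans ?_ ih
    by_cases he : s(a, c) = s(x, y)
    · rw [Sym2.eq_iff] at he
      rcases he with ⟨h1, h2⟩ | ⟨h1, h2⟩
      · subst h1; subst h2; exact hr
      · subst h1; subst h2; exact hr.symm
    · have hadj : (G \ SimpleGraph.fromEdgeSet {s(x, y)}).Adj a c := by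
        rw [sdiff_adj]
        refine ⟨hac, ?_⟩
        rw [fromEdgeSet_adj]
        rintro ⟨hmem, -⟩
        exact he hmem
      exact hadj.reachable

private lemma conn_del {G : SimpleGraph α} {x y : α}
    (hc : G.Connected) (hr : (G \ SimpleGraph.fromEdgeSet {s(x, y)}).Reachable x y) :
    (G \ SimpleGraph.fromEdgeSet {s(x, y)}).Connected := by
  rw [connected_iff]
  refine ⟨fun a b => ?_, hc.nonempty⟩
  obtain ⟨p⟩ := hc.preconnected a b
  exact walk_del_reach hr p

private lemma sub_edgeSet_deleteEdges {G : SimpleGraph α} (C : G.Subgraph)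
    (s : Set (Sym2 α)) : (C.deleteEdges s).edgeSet = C.edgeSet \ s := by
  ext e
  induction e using Sym2.ind with
  | _ a b => simp [Subgraph.mem_edgeSet, Subgraph.deleteEdges_adj, Set.mem_diff]

private lemma exists_tree_le [Fintype α] {G : SimpleGraph α} :
    ∀ n (C : G.Subgraph), C.edgeSet.ncard = n → C.Connected →
      ∃ T : G.Subgraph, T ≤ C ∧ T.verts = C.verts ∧ T.coe.IsTree := by
  intro n
  induction n using Nat.strong_induction_on with
  | _ n ih =>
    intro C hn hconn
    by_cases hac : C.coe.IsAcyclic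
    · exact ⟨C, le_refl _, rfl, ⟨hconn.coe, hac⟩⟩
    · rw [isAcyclic_iff_forall_adj_isBridge] at hac
      push_neg at hac
      obtain ⟨v, w, hadj, hbr⟩ := hac
      have hr : (C.coe \ SimpleGraph.fromEdgeSet {s(v, w)}).Reachable v w := by
        by_contra hcon
        exact hbr hcon
      have hDconn : (C.coe \ SimpleGraph.fromEdgeSet {s(v, w)}).Connected :=
        conn_del hconn.coe hr
      set C' := C.deleteEdges {s(v.1, w.1)} with hC'
      have hpre : (Sym2.map (Subtype.val : C.verts → α) ⁻¹' {s(v.1, w.1)})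
          = {s(v, w)} := by
        ext e
        induction e using Sym2.ind with
        | _ a b =>
          simp only [Set.mem_preimage, Sym2.map_pair_eq, Set.mem_singleton_iff, Sym2.eq_iff]
          constructor
          · rintro (⟨h1, h2⟩ | ⟨h1, h2⟩)
            · exact Or.inl ⟨Subtype.ext h1, Subtype.ext h2⟩
            · exact Or.inr ⟨Subtype.ext h1, Subtype.ext h2⟩
          · rintro (⟨rfl, rfl⟩ | ⟨rfl, rfl⟩)
            · exact Or.inl ⟨rfl, rfl⟩
            · exact Or.inr ⟨rfl, rfl⟩
      have hcoe : C'.coe = C.coe \ SimpleGraph.fromEdgeSet {s(v, w)} := by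
        have h2 := Subgraph.coe_deleteEdges_eq (G' := C) {s(v.1, w.1)}
        rw [hpre] at h2
        exact h2
      have hconn' : C'.Connected := by
        rw [Subgraph.connected_iff', hcoe]
        exact hDconn
      have he : s(v.1, w.1) ∈ C.edgeSet := Subgraph.mem_edgeSet.2 hadj
      have hlt : C'.edgeSet.ncard < n := by
        rw [hC', sub_edgeSet_deleteEdges, ← hn]
        exact Set.ncard_diff_singleton_lt_of_mem he (Set.toFinite _)
      obtain ⟨T, hT1, hT2, hT3⟩ := ih _ hlt C' rfl hconn'
      exact ⟨T, hT1.trans (Subgraph.deleteEdges_le _), hT2.trans (Subgraph.deleteEdges_verts _), hT3⟩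

-- a connected subgraph with two distinct vertices has an edge
private lemma sub_conn_has_edge {G : SimpleGraph α} {T : G.Subgraph} {x y : α}
    (hx : x ∈ T.verts) (hy : y ∈ T.verts) (hne : x ≠ y) (hc : T.coe.Connected) :
    ∃ e, e ∈ T.edgeSet := by
  obtain ⟨p⟩ := hc.preconnected ⟨x, hx⟩ ⟨y, hy⟩
  have hlen : 0 < p.length := by
    rcases Nat.eq_zero_or_pos p.length with h0 | h
    · exact absurd (congrArg Subtype.val (p.eq_of_length_eq_zero h0)) hne
    · exact h
  have hadj := p.toSubgraph_adj_getVert hlen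
  have hadj2 : T.coe.Adj (p.getVert 0) (p.getVert 1) := hadj.adj_sub
  exact ⟨s((p.getVert 0).1, (p.getVert 1).1), Subgraph.mem_edgeSet.2 hadj2⟩

end Helpers

section Helpers2
open SimpleGraph
variable {V : Type*}

private lemma span_edgeSet {G : SimpleGraph V} (H : G.Subgraph) :
    H.spanningCoe.edgeSet = H.edgeSet := by
  ext e
  induction e using Sym2.ind with
  | _ a b => simp [SimpleGraph.mem_edgeSet, Subgraph.mem_edgeSet, Subgraph.spanningCoe]

private lemma span_reach {G : SimpleGraph V} {H : G.Subgraph} {a b : V}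
    (ha : a ∈ H.verts) (hb : b ∈ H.verts) (hc : H.coe.Connected) :
    H.spanningCoe.Reachable a b := by
  obtain ⟨p⟩ := hc.preconnected ⟨a, ha⟩ ⟨b, hb⟩
  exact ⟨p.map ⟨Subtype.val, fun h => h⟩⟩

private lemma packing_mono {G : SimpleGraph V} {S : Set V} {m n : ℕ}
    (h : HasSteinerPacking G S n) (hmn : m ≤ n) : HasSteinerPacking G S m := by
  obtain ⟨T, h1, h2⟩ := h
  exact ⟨fun i => T (Fin.castLE hmn i), fun i => h1 _,
    fun i j hij => h2 _ _ (fun hh => hij (Fin.castLE_injective hmn hh))⟩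

private lemma exists_packing {G : SimpleGraph V} [Fintype V] {k : ℕ} {x y z : V}
    (hxy : x ≠ y)
    (hle : k ≤ steinerNum G {x, y, z}) : HasSteinerPacking G {x, y, z} k := by
  set P := {n | HasSteinerPacking G ({x, y, z} : Set V) n} with hP
  have hbdd : BddAbove P := by
    refine ⟨Nat.card (Sym2 V), fun n hn => ?_⟩
    obtain ⟨T, hT, hdisj⟩ := hn
    have hedge : ∀ i, ∃ e, e ∈ (T i).edgeSet := fun i =>
      sub_conn_has_edge ((hT i).1 (by simp)) ((hT i).1 (by simp)) hxy (hT i).2.isConnected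
    have hfin : Finite (Sym2 V) :=
      Finite.of_surjective (Quot.mk _) Quot.mk_surjective
    have hinj : Function.Injective (fun i => (hedge i).choose) := by
      intro i j hij
      by_contra hne
      have h1 := (hedge i).choose_spec
      have h2 := (hedge j).choose_spec
      simp only at hij
      rw [hij] at h1
      have hd := hdisj i j hne
      rw [Set.eq_empty_iff_forall_notMem] at hd
      exact hd _ ⟨h1, h2⟩
    calc n = Nat.card (Fin n) := by simp
    _ ≤ Nat.card (Sym2 V) := Nat.card_le_card_of_injective _ hinj
  have h0 : (0 : ℕ) ∈ P := ⟨Fin.elim0, fun i => i.elim0, fun i => i.elim0⟩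
  have hmem : sSup P ∈ P := Nat.sSup_mem ⟨0, h0⟩ hbdd
  exact packing_mono hmem hle

end Helpers2

open SimpleGraph

theorem stmt4 {V : Type*} [Fintype V] (G : SimpleGraph V)
    (k : ℕ) (hk : genEdgeConn G 3 = k) (hk2 : 2 ≤ k)
    (x y z : V) (hxy : x ≠ y) (hxz : x ≠ z) (hyz : y ≠ z) :
    ∃ T : Fin (k - 2) → G.Subgraph,
      (∀ i, IsSteinerTree G {x, y, z} (T i)) ∧
      (∀ i j, i ≠ j → (T i).edgeSet ∩ (T j).edgeSet = ∅) ∧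
      (∀ i, ∀ a b, (T i).Adj a b → ¬ (a ∈ ({x, y, z} : Set V) ∧ b ∈ ({x, y, z} : Set V))) := by
  classical
  set S : Set V := {x, y, z} with hSdef
  set E3 : Set (Sym2 V) := {s(x, y), s(x, z), s(y, z)} with hE3def
  have hexy_xz : s(x, y) ≠ s(x, z) := by
    rw [Ne, Sym2.eq_iff]; rintro (⟨-, h⟩ | ⟨h, -⟩) <;> [exact hyz h; exact hxz h]
  have hexy_yz : s(x, y) ≠ s(y, z) := by
    rw [Ne, Sym2.eq_iff]; rintro (⟨h, -⟩ | ⟨h, -⟩) <;> [exact hxy h; exact hxz h]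
  have hexz_yz : s(x, z) ≠ s(y, z) := by
    rw [Ne, Sym2.eq_iff]; rintro (⟨h, -⟩ | ⟨-, h⟩) <;> [exact hxy h; exact (hyz h.symm)]
  have spair : ∀ a b : V, a ∈ S → b ∈ S → a ≠ b → s(a, b) ∈ E3 := by
    intro a b ha hb hab
    rw [hSdef] at ha hb
    rcases ha with rfl | rfl | rfl <;> rcases hb with rfl | rfl | rfl <;>
      simp_all [hE3def, Sym2.eq_swap] <;> tauto
  -- get a packing of k trees
  have h3 : S.ncard = 3 := by
    rw [hSdef, Set.ncard_insert_of_notMem (by simp [hxy, hxz]),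
      Set.ncard_insert_of_notMem (by simp [hyz]), Set.ncard_singleton]
  have hle : k ≤ steinerNum G S := by
    rw [← hk, genEdgeConn]
    exact Nat.sInf_le ⟨S, Set.toFinite _, h3, rfl⟩
  obtain ⟨T, hT, hdisj⟩ := exists_packing hxy hle
  -- the bad trees
  set bad : Fin k → Prop := fun i => ∃ e ∈ E3, e ∈ (T i).edgeSet with hbaddef
  set B : Finset (Fin k) := Finset.univ.filter bad with hBdef
  set f : Fin k → Sym2 V := fun i => if h : bad i then h.choose else s(x, y) with hfdef
  have hfspec : ∀ i, bad i → f i ∈ E3 ∧ f i ∈ (T i).edgeSet := by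
    intro i hi
    rw [hfdef]
    simp only [hi, dif_pos]
    exact ⟨hi.choose_spec.1, hi.choose_spec.2⟩
  set E3f : Finset (Sym2 V) := {s(x, y), s(x, z), s(y, z)} with hE3fdef
  have hE3E3f : ∀ e, e ∈ E3 → e ∈ E3f := by
    intro e he; rw [hE3def] at he; rw [hE3fdef]
    rcases he with rfl | rfl | rfl <;> simp
  have hmaps : ∀ i ∈ B, f i ∈ E3f := by
    intro i hi
    rw [hBdef, Finset.mem_filter] at hi
    exact hE3E3f _ (hfspec i hi.2).1
  have hinjOn : Set.InjOn f B := by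
    intro i hi j hj hij
    rw [Finset.coe_filter, Set.mem_setOf_eq] at hi hj
    by_contra hne
    have h1 := (hfspec i hi.2).2
    have h2 := (hfspec j hj.2).2
    rw [hij] at h1
    have hd := hdisj i j hne
    rw [Set.eq_empty_iff_forall_notMem] at hd
    exact hd _ ⟨h1, h2⟩
  have hBcard : B.card ≤ 3 := by
    calc B.card ≤ E3f.card := Finset.card_le_card_of_injOn f hmaps hinjOn
    _ ≤ 3 := by
        rw [hE3fdef]
        apply le_trans (Finset.card_insert_le _ _)
        simp [Finset.card_insert_le]
        apply lt_of_le_of_lt (Finset.card_insert_le _ _)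
        simp
  by_cases hB2 : B.card ≤ 2
  · -- easy case : at least k - 2 good trees
    have hcompl : k - 2 ≤ Bᶜ.card := by
      rw [Finset.card_compl, Fintype.card_fin]
      omega
    obtain ⟨t, hts, htcard⟩ := Finset.exists_subset_card_eq hcompl
    set e := (Finset.equivFinOfCardEq htcard).symm with hedef
    refine ⟨fun i => T (e i).1, fun i => hT _, ?_, ?_⟩
    · intro i j hij
      apply hdisj
      intro hh
      exact hij (Equiv.injective e (Subtype.ext hh))
    · rintro i a b hadj ⟨ha, hb⟩
      have hne : a ≠ b := (hadj.adj_sub).ne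
      have hbadm : bad (e i).1 := ⟨s(a, b), spair a b ha hb hne, Subgraph.mem_edgeSet.2 hadj⟩
      have hmem : (e i).1 ∈ Bᶜ := hts (e i).2
      rw [Finset.mem_compl, hBdef, Finset.mem_filter] at hmem
      exact hmem ⟨Finset.mem_univ _, hbadm⟩
  · -- hard case : exactly 3 bad trees
    have hB3 : B.card = 3 := le_antisymm hBcard (by omega)
    have hE3fcard : E3f.card ≤ B.card := by
      rw [hB3]
      calc E3f.card ≤ 3 := by
            rw [hE3fdef]
            apply le_trans (Finset.card_insert_le _ _)
            simp [Finset.card_insert_le]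
            apply lt_of_le_of_lt (Finset.card_insert_le _ _)
            simp
      _ = 3 := rfl
    have hsurj := Finset.surj_on_of_inj_on_of_card_le (s := B) (t := E3f)
      (fun i _ => f i) (fun i hi => hmaps i hi)
      (fun i j hi hj hij => hinjOn (by simpa using hi) (by simpa using hj) hij)
      hE3fcard
    obtain ⟨i1, hi1B, hfi1⟩ := hsurj s(x, y) (by rw [hE3fdef]; simp)
    obtain ⟨i2, hi2B, hfi2⟩ := hsurj s(x, z) (by rw [hE3fdef]; simp)
    obtain ⟨i3, hi3B, hfi3⟩ := hsurj s(y, z) (by rw [hE3fdef]; simp)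
    rw [hBdef, Finset.mem_filter] at hi1B hi2B hi3B
    have he1 : s(x, y) ∈ (T i1).edgeSet := by rw [hfi1]; exact (hfspec i1 hi1B.2).2
    have he2 : s(x, z) ∈ (T i2).edgeSet := by rw [hfi2]; exact (hfspec i2 hi2B.2).2
    have he3 : s(y, z) ∈ (T i3).edgeSet := by rw [hfi3]; exact (hfspec i3 hi3B.2).2
    have h12 : i1 ≠ i2 := by rintro rfl; exact hexy_xz (hfi1.trans hfi2.symm)
    have h13 : i1 ≠ i3 := by rintro rfl; exact hexy_yz (hfi1.trans hfi3.symm)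
    have h23 : i2 ≠ i3 := by rintro rfl; exact hexz_yz (hfi2.trans hfi3.symm)
    have hnotmem : ∀ {i j : Fin k} {e : Sym2 V}, i ≠ j → e ∈ (T j).edgeSet →
        e ∉ (T i).edgeSet := by
      intro i j e hij hej hei
      have hd := hdisj i j hij
      rw [Set.eq_empty_iff_forall_notMem] at hd
      exact hd _ ⟨hei, hej⟩
    -- the union graph minus the S-edges
    set U : SimpleGraph V :=
      (T i1).spanningCoe ⊔ (T i2).spanningCoe ⊔ (T i3).spanningCoe with hUdef
    set D : SimpleGraph V := U \ SimpleGraph.fromEdgeSet E3 with hDdef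
    have hE3mem : ∀ e, e ∈ E3 → e = s(x, y) ∨ e = s(x, z) ∨ e = s(y, z) := by
      intro e he; rw [hE3def] at he; simpa using he
    have hlift1 : ((T i1).spanningCoe \ SimpleGraph.fromEdgeSet {s(x, y)}) ≤ D := by
      intro a b hab
      rw [sdiff_adj] at hab
      rw [hDdef, sdiff_adj]
      constructor
      · rw [hUdef]; exact Or.inl (Or.inl hab.1)
      · rw [fromEdgeSet_adj]
        rintro ⟨hm, hne⟩
        have hab2 : s(a, b) ∈ (T i1).edgeSet := by
          rw [← span_edgeSet]; exact hab.1
        rcases hE3mem _ hm with h | h | h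
        · exact hab.2 (by rw [fromEdgeSet_adj]; exact ⟨by simp [h], hne⟩)
        · exact hnotmem h12 he2 (h ▸ hab2)
        · exact hnotmem h13 he3 (h ▸ hab2)
    have hlift2 : ((T i2).spanningCoe \ SimpleGraph.fromEdgeSet {s(x, z)}) ≤ D := by
      intro a b hab
      rw [sdiff_adj] at hab
      rw [hDdef, sdiff_adj]
      constructor
      · rw [hUdef]; exact Or.inl (Or.inr hab.1)
      · rw [fromEdgeSet_adj]
        rintro ⟨hm, hne⟩
        have hab2 : s(a, b) ∈ (T i2).edgeSet := by
          rw [← span_edgeSet]; exact hab.1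
        rcases hE3mem _ hm with h | h | h
        · exact hnotmem h12.symm he1 (h ▸ hab2)
        · exact hab.2 (by rw [fromEdgeSet_adj]; exact ⟨by simp [h], hne⟩)
        · exact hnotmem h23 he3 (h ▸ hab2)
    have hlift3 : ((T i3).spanningCoe \ SimpleGraph.fromEdgeSet {s(y, z)}) ≤ D := by
      intro a b hab
      rw [sdiff_adj] at hab
      rw [hDdef, sdiff_adj]
      constructor
      · rw [hUdef]; exact Or.inr hab.1
      · rw [fromEdgeSet_adj]
        rintro ⟨hm, hne⟩
        have hab2 : s(a, b) ∈ (T i3).edgeSet := by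
          rw [← span_edgeSet]; exact hab.1
        rcases hE3mem _ hm with h | h | h
        · exact hnotmem h13.symm he1 (h ▸ hab2)
        · exact hnotmem h23.symm he2 (h ▸ hab2)
        · exact hab.2 (by rw [fromEdgeSet_adj]; exact ⟨by simp [h], hne⟩)
    -- reachability facts
    have hxv : ∀ r : Fin k, x ∈ (T r).verts := fun r => (hT r).1 (by simp)
    have hyv : ∀ r : Fin k, y ∈ (T r).verts := fun r => (hT r).1 (by simp)
    have hzv : ∀ r : Fin k, z ∈ (T r).verts := fun r => (hT r).1 (by simp)
    have r1 : D.Reachable z x ∨ D.Reachable z y := by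
      rcases reach_del_or y (span_reach (hzv i1) (hxv i1) (hT i1).2.isConnected) with h | h
      · exact Or.inl (h.mono hlift1)
      · exact Or.inr (h.mono hlift1)
    have r2 : D.Reachable y x ∨ D.Reachable y z := by
      rcases reach_del_or z (span_reach (hyv i2) (hxv i2) (hT i2).2.isConnected) with h | h
      · exact Or.inl (h.mono hlift2)
      · exact Or.inr (h.mono hlift2)
    have r3 : D.Reachable x y ∨ D.Reachable x z := by
      rcases reach_del_or z (span_reach (hxv i3) (hyv i3) (hT i3).2.isConnected) with h | h
      · exact Or.inl (h.mono hlift3)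
      · exact Or.inr (h.mono hlift3)
    have hreach : D.Reachable y x ∧ D.Reachable z x := by
      rcases r1 with h1 | h1 <;> rcases r2 with h2 | h2
      · exact ⟨h2, h1⟩
      · exact ⟨h2.trans h1, h1⟩
      · exact ⟨h2, h1.trans h2⟩
      · rcases r3 with h3 | h3
        · exact ⟨h3.symm, h1.trans h3.symm⟩
        · exact ⟨h1.symm.trans h3.symm, h3.symm⟩
    obtain ⟨⟨p⟩, ⟨q⟩⟩ := hreach
    have hDU : D ≤ U := sdiff_le
    have hDG : D ≤ G := le_trans hDU (sup_le (sup_le ((T i1).spanningCoe_le)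
      ((T i2).spanningCoe_le)) ((T i3).spanningCoe_le))
    have hpedges : ∀ e ∈ p.edges, e ∈ G.edgeSet :=
      fun e he => (edgeSet_mono hDG) (p.edges_subset_edgeSet he)
    have hqedges : ∀ e ∈ q.edges, e ∈ G.edgeSet :=
      fun e he => (edgeSet_mono hDG) (q.edges_subset_edgeSet he)
    set pG := p.transfer G hpedges with hpGdef
    set qG := q.transfer G hqedges with hqGdef
    set C : G.Subgraph := pG.toSubgraph ⊔ qG.toSubgraph with hCdef
    have hCconn : C.Connected := by
      refine Subgraph.connected_sup (pG.toSubgraph_connected).preconnected (qG.toSubgraph_connected).preconnected ⟨x, ?_⟩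
      rw [Subgraph.verts_inf]
      exact ⟨pG.end_mem_verts_toSubgraph, qG.end_mem_verts_toSubgraph⟩
    have hCedges : C.edgeSet ⊆ D.edgeSet := by
      rw [hCdef, Subgraph.edgeSet_sup]
      rintro e (he | he)
      · rw [Walk.mem_edges_toSubgraph] at he
        rw [hpGdef, Walk.edges_transfer] at he
        exact p.edges_subset_edgeSet he
      · rw [Walk.mem_edges_toSubgraph] at he
        rw [hqGdef, Walk.edges_transfer] at he
        exact q.edges_subset_edgeSet he
    obtain ⟨T0, hT0le, hT0verts, hT0tree⟩ := exists_tree_le _ C rfl hCconn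
    have hT0S : S ⊆ T0.verts := by
      rw [hT0verts, hCdef, Subgraph.verts_sup]
      rw [hSdef]
      rintro a (rfl | rfl | rfl)
      · exact Or.inl pG.end_mem_verts_toSubgraph
      · exact Or.inl pG.start_mem_verts_toSubgraph
      · exact Or.inr qG.start_mem_verts_toSubgraph
    have hT0edges : T0.edgeSet ⊆ D.edgeSet :=
      fun e he => hCedges (Subgraph.edgeSet_mono hT0le he)
    have hT0adj : ∀ a b : V, T0.Adj a b → D.Adj a b := by
      intro a b hadj
      have : s(a, b) ∈ D.edgeSet := hT0edges (Subgraph.mem_edgeSet.2 hadj)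
      exact this
    -- the good trees
    have hk3 : 3 ≤ k := by
      have := Finset.card_le_univ B
      rw [hB3, Fintype.card_fin] at this
      exact this
    have hgood : Bᶜ.card = k - 3 := by
      rw [Finset.card_compl, hB3, Fintype.card_fin]
    set e := (Finset.equivFinOfCardEq hgood).symm with hedef
    have hT0disj : ∀ m : Fin k, m ∈ Bᶜ → T0.edgeSet ∩ (T m).edgeSet = ∅ := by
      intro m hm
      rw [Set.eq_empty_iff_forall_notMem]
      intro ed hd
      obtain ⟨hd1, hd2⟩ := hd
      have hU : ed ∈ U.edgeSet := (edgeSet_mono hDU) (hT0edges hd1)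
      rw [hUdef, edgeSet_sup, edgeSet_sup, span_edgeSet, span_edgeSet, span_edgeSet] at hU
      have hmB : m ∉ B := Finset.mem_compl.1 hm
      have hm1 : m ≠ i1 := by rintro rfl; exact hmB (Finset.mem_filter.2 hi1B)
      have hm2 : m ≠ i2 := by rintro rfl; exact hmB (Finset.mem_filter.2 hi2B)
      have hm3 : m ≠ i3 := by rintro rfl; exact hmB (Finset.mem_filter.2 hi3B)
      rcases hU with (h | h) | h
      · exact absurd hd2 (hnotmem hm1 h)
      · exact absurd hd2 (hnotmem hm2 h)
      · exact absurd hd2 (hnotmem hm3 h)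
    refine ⟨fun i => if h : (i : ℕ) < k - 3 then T (e ⟨i, h⟩).1 else T0, ?_, ?_, ?_⟩
    · intro i
      dsimp only
      by_cases h : (i : ℕ) < k - 3
      · rw [dif_pos h]; exact hT _
      · rw [dif_neg h]; exact ⟨hT0S, hT0tree⟩
    · intro i j hij
      dsimp only
      by_cases h1 : (i : ℕ) < k - 3 <;> by_cases h2 : (j : ℕ) < k - 3
      · rw [dif_pos h1, dif_pos h2]
        apply hdisj
        intro hh
        have : (⟨(i : ℕ), h1⟩ : Fin (k - 3)) = ⟨(j : ℕ), h2⟩ :=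
          Equiv.injective e (Subtype.ext hh)
        have hval : (i : ℕ) = (j : ℕ) := by simpa using this
        exact hij (Fin.ext hval)
      · rw [dif_pos h1, dif_neg h2]
        rw [Set.inter_comm]
        exact hT0disj _ (by simpa using (e ⟨(i : ℕ), h1⟩).2)
      · rw [dif_neg h1, dif_pos h2]
        exact hT0disj _ (by simpa using (e ⟨(j : ℕ), h2⟩).2)
      · exfalso
        apply hij
        have hii := i.isLt
        have hjj := j.isLt
        exact Fin.ext (by omega)
    · rintro i a b hadj ⟨ha, hb⟩
      dsimp only at hadj
      by_cases h : (i : ℕ) < k - 3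
      · rw [dif_pos h] at hadj
        have hne : a ≠ b := (hadj.adj_sub).ne
        have hbadm : bad (e ⟨(i : ℕ), h⟩).1 :=
          ⟨s(a, b), spair a b ha hb hne, Subgraph.mem_edgeSet.2 hadj⟩
        have hmB := Finset.mem_compl.1 (e ⟨(i : ℕ), h⟩).2
        exact hmB (Finset.mem_filter.2 ⟨Finset.mem_univ _, hbadm⟩)
      · rw [dif_neg h] at hadj
        have hne : a ≠ b := (hadj.adj_sub).ne
        have hDadj : D.Adj a b := hT0adj a b hadj
        rw [hDdef, sdiff_adj] at hDadj
        exact hDadj.2 (by rw [fromEdgeSet_adj]; exact ⟨spair a b ha hb hne, hne⟩)
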